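/- arXiv:2502.15206 — 2 statements merged into one kernel-verified Lean document; each statement's English description precedes it below -/
import Mathlib

section
/- Let B ∈ S^n and let X ∈ S^n_+ have rank r with B•X = 0. Then there exist vectors x_1, …, x_r ∈ ℝ^n such that X = Σ_{i=1}^r x_i x_iᵀ and x_iᵀ B x_i = 0 for every i = 1, …, r. -/
open Matrix

/-- Algebraic rotation: if `qa > 0 > qb` then there is a rotation `(c, s)` on the
unit circle making the quadratic `c²·qa + c·s·m + s²·qb` vanish. -/
lemma rot_exists (qa qb m : ℝ) (ha : 0 < qa) (hb : qb < 0) :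
    ∃ c s : ℝ, c ^ 2 + s ^ 2 = 1 ∧ c ^ 2 * qa + c * s * m + s ^ 2 * qb = 0 := by
  have hD : 0 < m ^ 2 - 4 * qb * qa := by nlinarith
  set d := Real.sqrt (m ^ 2 - 4 * qb * qa) with hd
  have hd2 : d ^ 2 = m ^ 2 - 4 * qb * qa := Real.sq_sqrt hD.le
  have hqb : qb ≠ 0 := ne_of_lt hb
  set t := (-m - d) / (2 * qb) with ht
  have hroot : qb * t ^ 2 + m * t + qa = 0 := by
    have h2 : 2 * qb * t = -m - d := by rw [ht]; field_simp
    have h4 : 4 * qb * (qb * t ^ 2 + m * t + qa) = 0 := by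
      linear_combination (2 * qb * t + m - d) * h2 + hd2
    exact (mul_eq_zero.mp h4).resolve_left (by intro h; apply hqb; linarith)
  have h1t : (0:ℝ) < 1 + t ^ 2 := by positivity
  set c := 1 / Real.sqrt (1 + t ^ 2) with hc
  have hsq : (Real.sqrt (1 + t ^ 2)) ^ 2 = 1 + t ^ 2 := Real.sq_sqrt h1t.le
  have hsqpos : 0 < Real.sqrt (1 + t ^ 2) := Real.sqrt_pos.mpr h1t
  have hc2 : c ^ 2 * (1 + t ^ 2) = 1 := by
    rw [hc, div_pow, one_pow, hsq]
    field_simp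
  refine ⟨c, t * c, ?_, ?_⟩
  · nlinarith [hc2]
  · nlinarith [hroot, hc2]

/-- Expansion of the quadratic form at a linear combination. -/
lemma quad_expand {n : ℕ} (B : Matrix (Fin n) (Fin n) ℝ) (c s : ℝ) (v w : Fin n → ℝ) :
    (c • v + s • w) ⬝ᵥ B.mulVec (c • v + s • w) =
      c ^ 2 * (v ⬝ᵥ B.mulVec v) +
        c * s * (v ⬝ᵥ B.mulVec w + w ⬝ᵥ B.mulVec v) + s ^ 2 * (w ⬝ᵥ B.mulVec w) := by
  simp only [Matrix.mulVec_add, Matrix.mulVec_smul, add_dotProduct, dotProduct_add,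
    smul_dotProduct, dotProduct_smul, smul_eq_mul]
  ring

/-- The sum of the two rank-one matrices of a rotated pair is unchanged. -/
lemma vecMulVec_pair {n : ℕ} (c s : ℝ) (hcs : c ^ 2 + s ^ 2 = 1) (v w : Fin n → ℝ) :
    vecMulVec (c • v + s • w) (c • v + s • w) +
      vecMulVec ((-s) • v + c • w) ((-s) • v + c • w) =
      vecMulVec v v + vecMulVec w w := by
  ext i j
  simp only [Matrix.add_apply, vecMulVec_apply, Pi.add_apply, Pi.smul_apply, smul_eq_mul]
  linear_combination (v i * v j + w i * w j) * hcs

lemma sum_update_pair {α : Type*} [Fintype α] [DecidableEq α] {M : Type*} [AddCommGroup M]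
    (f : α → M) (a b : α) (hab : a ≠ b) (u v : M) :
    ∑ i, Function.update (Function.update f a u) b v i =
      (∑ i, f i) - f a - f b + u + v := by
  classical
  rw [Finset.sum_update_of_mem (Finset.mem_univ b)]
  have hamem : a ∈ Finset.univ \ {b} := by simp [hab]
  rw [Finset.sum_update_of_mem hamem]
  have h1 : ∑ x ∈ (Finset.univ \ {b}) \ {a}, f x
      = ((∑ i, f i) - f b) - f a := by
    rw [Finset.sum_sdiff_eq_sub (by simp [hab] : ({a} : Finset α) ⊆ Finset.univ \ {b}),
      Finset.sum_sdiff_eq_sub (Finset.subset_univ {b})]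
    simp
  rw [h1]
  abel

/-- Key induction: any list of vectors whose `B`-quadratic values sum to zero can be
rotated (preserving the sum of rank-one matrices) so that every quadratic value is zero. -/
lemma key_rotation {n : ℕ} (B : Matrix (Fin n) (Fin n) ℝ) :
    ∀ (r : ℕ) (y : Fin r → Fin n → ℝ), (∑ i, y i ⬝ᵥ B.mulVec (y i)) = 0 →
      ∃ x : Fin r → Fin n → ℝ,
        (∑ i, vecMulVec (x i) (x i)) = (∑ i, vecMulVec (y i) (y i)) ∧
          ∀ i, x i ⬝ᵥ B.mulVec (x i) = 0 := by
  intro r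
  induction r with
  | zero => exact fun y _ => ⟨y, rfl, fun i => i.elim0⟩
  | succ r ih =>
    intro y hsum
    set q : (Fin n → ℝ) → ℝ := fun v => v ⬝ᵥ B.mulVec v with hq
    by_cases hall : ∀ i, q (y i) = 0
    · exact ⟨y, rfl, hall⟩
    · push_neg at hall
      obtain ⟨j, hj⟩ := hall
      have hsumq : (∑ i, q (y i)) = 0 := hsum
      -- find indices with positive and negative quadratic values
      have hpos_ex : ∃ a, 0 < q (y a) := by
        by_contra hc
        push_neg at hc
        have hj' : q (y j) < 0 := lt_of_le_of_ne (hc j) hj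
        have h0 : 0 < ∑ i, -(q (y i)) :=
          Finset.sum_pos' (fun i _ => neg_nonneg.mpr (hc i))
            ⟨j, Finset.mem_univ j, by linarith⟩
        rw [Finset.sum_neg_distrib, hsumq] at h0
        norm_num at h0
      have hneg_ex : ∃ b, q (y b) < 0 := by
        by_contra hc
        push_neg at hc
        have hj' : 0 < q (y j) := lt_of_le_of_ne (hc j) (Ne.symm hj)
        have h0 : 0 < ∑ i, q (y i) :=
          Finset.sum_pos' (fun i _ => hc i) ⟨j, Finset.mem_univ j, hj'⟩
        rw [hsumq] at h0
        norm_num at h0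
      obtain ⟨a, hqa⟩ := hpos_ex
      obtain ⟨b, hqb⟩ := hneg_ex
      have hab : a ≠ b := by
        rintro rfl; linarith
      set m : ℝ := y a ⬝ᵥ B.mulVec (y b) + y b ⬝ᵥ B.mulVec (y a) with hm
      obtain ⟨c, s, hcs, hzero⟩ := rot_exists (q (y a)) (q (y b)) m hqa hqb
      set u : Fin n → ℝ := c • y a + s • y b with hu
      set v : Fin n → ℝ := (-s) • y a + c • y b with hv
      have hqu : q u = 0 := by
        show (c • y a + s • y b) ⬝ᵥ B.mulVec (c • y a + s • y b) = 0
        rw [quad_expand]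
        exact hzero
      have hquv : q u + q v = q (y a) + q (y b) := by
        show (c • y a + s • y b) ⬝ᵥ B.mulVec (c • y a + s • y b) +
            ((-s) • y a + c • y b) ⬝ᵥ B.mulVec ((-s) • y a + c • y b) =
            y a ⬝ᵥ B.mulVec (y a) + y b ⬝ᵥ B.mulVec (y b)
        rw [quad_expand, quad_expand]
        linear_combination (y a ⬝ᵥ B.mulVec (y a) + y b ⬝ᵥ B.mulVec (y b)) * hcs
      set z : Fin (r + 1) → Fin n → ℝ :=
        Function.update (Function.update y a u) b v with hz
      have hza : z a = u := by
        rw [hz, Function.update_of_ne hab, Function.update_self]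
      have hzb : z b = v := by
        rw [hz, Function.update_self]
      -- sums over z
      have hzsum_mat : (∑ i, vecMulVec (z i) (z i)) = ∑ i, vecMulVec (y i) (y i) := by
        have hcomp : (fun i => vecMulVec (z i) (z i)) =
            Function.update (Function.update (fun i => vecMulVec (y i) (y i)) a
              (vecMulVec u u)) b (vecMulVec v v) := by
          funext i
          rcases eq_or_ne i b with rfl | hib
          · simp [hzb]
          · rcases eq_or_ne i a with rfl | hia
            · simp [hza, Function.update_of_ne hib, hib]
            · simp [hz, Function.update_of_ne hib, Function.update_of_ne hia]
        calc (∑ i, vecMulVec (z i) (z i))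
            = (∑ i, vecMulVec (y i) (y i)) - vecMulVec (y a) (y a) - vecMulVec (y b) (y b)
              + vecMulVec u u + vecMulVec v v := by
              rw [show (∑ i, vecMulVec (z i) (z i)) = ∑ i, (Function.update
                (Function.update (fun i => vecMulVec (y i) (y i)) a (vecMulVec u u)) b
                (vecMulVec v v)) i from by rw [← hcomp]]
              exact sum_update_pair _ a b hab _ _
          _ = ∑ i, vecMulVec (y i) (y i) := by
              have hthis := vecMulVec_pair c s hcs (y a) (y b)
              rw [← hu, ← hv] at hthis
              rw [add_assoc, hthis]
              abel
      have hzsum_q : (∑ i, q (z i)) = 0 := by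
        have hcomp : (fun i => q (z i)) =
            Function.update (Function.update (fun i => q (y i)) a (q u)) b (q v) := by
          funext i
          rcases eq_or_ne i b with rfl | hib
          · simp [hzb]
          · rcases eq_or_ne i a with rfl | hia
            · simp [hza, Function.update_of_ne hib, hib]
            · simp [hz, Function.update_of_ne hib, Function.update_of_ne hia]
        calc (∑ i, q (z i))
            = (∑ i, q (y i)) - q (y a) - q (y b) + q u + q v := by
              rw [show (∑ i, q (z i)) = ∑ i, (Function.update
                (Function.update (fun i => q (y i)) a (q u)) b (q v)) i from by rw [← hcomp]]
              exact sum_update_pair _ a b hab _ _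
          _ = 0 := by rw [hsum]; linarith [hquv]
      -- move index a to position 0
      set σ : Equiv.Perm (Fin (r + 1)) := Equiv.swap 0 a with hσ
      set w : Fin (r + 1) → Fin n → ℝ := z ∘ σ with hw
      have hw0 : w 0 = z a := by
        simp [hw, hσ, Equiv.swap_apply_left]
      have hwsum_mat : (∑ i, vecMulVec (w i) (w i)) = ∑ i, vecMulVec (y i) (y i) := by
        rw [← hzsum_mat]
        exact Equiv.sum_comp σ (fun i => vecMulVec (z i) (z i))
      have hwsum_q : (∑ i, q (w i)) = 0 := by
        rw [← hzsum_q]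
        exact Equiv.sum_comp σ (fun i => q (z i))
      have htail : (∑ i : Fin r, q (w i.succ)) = 0 := by
        have := Fin.sum_univ_succ (fun i => q (w i))
        rw [this, hw0, hza, hqu] at hwsum_q
        linarith [hwsum_q]
      obtain ⟨x', hx'sum, hx'q⟩ := ih (fun i => w i.succ) htail
      refine ⟨Fin.cons (w 0) x', ?_, ?_⟩
      · rw [Fin.sum_univ_succ]
        simp only [Fin.cons_zero, Fin.cons_succ]
        rw [hx'sum, ← hwsum_mat, Fin.sum_univ_succ]
      · intro i
        refine Fin.cases ?_ ?_ i
        · simpa [hw0, hza] using hqu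
        · intro i
          simpa using hx'q i

/-- rank-one decomposition of a PSD matrix `X` of rank `r` with
`B • X = 0`, all of whose rank-one terms satisfy `xᵢᵀ B xᵢ = 0`. -/
theorem rankOne_decomposition_zero (n r : ℕ)
    (B X : Matrix (Fin n) (Fin n) ℝ) (hB : B.IsSymm)
    (hX : X.PosSemidef) (hr : X.rank = r)
    (hBX : (∑ i, ∑ j, B i j * X i j) = 0) :
    ∃ x : Fin r → Fin n → ℝ,
      X = ∑ i, vecMulVec (x i) (x i) ∧ ∀ i, (x i) ⬝ᵥ B.mulVec (x i) = 0 := by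
  classical
  have hH := hX.1
  set lam := hH.eigenvalues with hlam
  set U : Matrix (Fin n) (Fin n) ℝ := (hH.eigenvectorUnitary : Matrix (Fin n) (Fin n) ℝ)
    with hU
  -- entrywise spectral decomposition
  have hentry : ∀ i j, X i j = ∑ k, lam k * (U i k * U j k) := by
    intro i j
    conv_lhs => rw [hH.spectral_theorem, Unitary.conjStarAlgAut_apply]
    rw [Matrix.mul_apply]
    refine Finset.sum_congr rfl fun k _ => ?_
    rw [Matrix.mul_apply]
    simp [Matrix.diagonal_apply, Matrix.star_apply, mul_ite, Finset.sum_ite_eq', hU]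
    ring
  -- the square-root-scaled eigenvectors
  set y : Fin n → Fin n → ℝ := fun k i => Real.sqrt (lam k) * U i k with hy
  have hlam_nn : ∀ k, 0 ≤ lam k := fun k => hX.eigenvalues_nonneg k
  have hvmv : ∀ k i j, vecMulVec (y k) (y k) i j = lam k * (U i k * U j k) := by
    intro k i j
    rw [vecMulVec_apply]
    show Real.sqrt (lam k) * U i k * (Real.sqrt (lam k) * U j k) = lam k * (U i k * U j k)
    rw [show Real.sqrt (lam k) * U i k * (Real.sqrt (lam k) * U j k)
        = Real.sqrt (lam k) * Real.sqrt (lam k) * (U i k * U j k) from by ring,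
      Real.mul_self_sqrt (hlam_nn k)]
  have hXsum : X = ∑ k, vecMulVec (y k) (y k) := by
    ext i j
    rw [Matrix.sum_apply, hentry i j]
    exact Finset.sum_congr rfl fun k _ => (hvmv k i j).symm
  -- restrict to the nonzero eigenvalues
  have hzero : ∀ k, lam k = 0 → vecMulVec (y k) (y k) = 0 := by
    intro k hk
    ext i j
    rw [hvmv k, hk]
    simp
  have hcard : Fintype.card {k // lam k ≠ 0} = r := by
    rw [← hH.rank_eq_card_non_zero_eigs, hr]
  set e : Fin r ≃ {k // lam k ≠ 0} := (Fintype.equivFinOfCardEq hcard).symm with he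
  set Y : Fin r → Fin n → ℝ := fun j => y (e j).1 with hY
  have hXsum' : X = ∑ j, vecMulVec (Y j) (Y j) := by
    rw [hXsum]
    have h1 : (∑ j, vecMulVec (Y j) (Y j))
        = ∑ k : {k // lam k ≠ 0}, vecMulVec (y k.1) (y k.1) :=
      Equiv.sum_comp e (fun k : {k // lam k ≠ 0} => vecMulVec (y k.1) (y k.1))
    rw [h1]
    rw [← Finset.sum_subtype (Finset.univ.filter (fun k => lam k ≠ 0))
      (by simp) (fun k => vecMulVec (y k) (y k))]
    rw [← Finset.sum_filter_add_sum_filter_not Finset.univ (fun k => lam k ≠ 0)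
      (fun k => vecMulVec (y k) (y k))]
    have h2 : ∑ k ∈ Finset.univ.filter (fun k => ¬ lam k ≠ 0),
        vecMulVec (y k) (y k) = 0 := by
      refine Finset.sum_eq_zero fun k hk => ?_
      simp only [Finset.mem_filter, not_not] at hk
      exact hzero k hk.2
    rw [h2, add_zero]
  -- the quadratic values sum to zero
  have hqsum : (∑ j, Y j ⬝ᵥ B.mulVec (Y j)) = 0 := by
    have hXe : ∀ a b, X a b = ∑ j, Y j a * Y j b := by
      intro a b
      rw [hXsum']
      rw [Matrix.sum_apply]
      exact Finset.sum_congr rfl fun j _ => by rw [vecMulVec_apply]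
    calc (∑ j, Y j ⬝ᵥ B.mulVec (Y j))
        = ∑ j, ∑ a, ∑ b, B a b * (Y j a * Y j b) := by
          refine Finset.sum_congr rfl fun j _ => ?_
          simp only [dotProduct, Matrix.mulVec, dotProduct, Finset.mul_sum]
          exact Finset.sum_congr rfl fun a _ => Finset.sum_congr rfl fun b _ => by ring
      _ = ∑ a, ∑ b, B a b * ∑ j, Y j a * Y j b := by
          rw [Finset.sum_comm]
          refine Finset.sum_congr rfl fun a _ => ?_
          rw [Finset.sum_comm]
          refine Finset.sum_congr rfl fun b _ => ?_
          rw [Finset.mul_sum]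
      _ = ∑ a, ∑ b, B a b * X a b := by
          refine Finset.sum_congr rfl fun a _ => Finset.sum_congr rfl fun b _ => ?_
          rw [hXe]
      _ = 0 := hBX
  obtain ⟨x, hxsum, hxq⟩ := key_rotation B r Y hqsum
  exact ⟨x, by rw [hXsum', ← hxsum], hxq⟩
end

section
/- Let 𝓑 = {B^1, …, B^m} ⊆ S^n satisfy Condition (B), and let H ∈ S^n. Suppose X̄ ∈ S^n_+ satisfies B^k•X̄ ≥ 0 for all k, H•X̄ = 1, B^{k_0}•X̄ = 0 for some index k_0, and suppose Ȳ ∈ S^n_+ satisfies Ȳ•X̄ = 0. Then there exists x ∈ ℝ^n such that the rank-one matrix X̃ = xxᵀ satisfies B^k•X̃ ≥ 0 for all k, H•X̃ = 1, and Ȳ•X̃ = 0. -/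
open Matrix Finset


/-- quadratic form as double sum -/
def qf {n : ℕ} (A : Matrix (Fin n) (Fin n) ℝ) (x : Fin n → ℝ) : ℝ :=
  ∑ i, ∑ j, A i j * (x i * x j)

lemma qf_smul {n : ℕ} (A : Matrix (Fin n) (Fin n) ℝ) (c : ℝ) (x : Fin n → ℝ) :
    qf A (c • x) = c ^ 2 * qf A x := by
  unfold qf
  rw [Finset.mul_sum]
  refine Finset.sum_congr rfl fun i _ => ?_
  rw [Finset.mul_sum]
  refine Finset.sum_congr rfl fun j _ => ?_
  simp only [Pi.smul_apply, smul_eq_mul]; ring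

lemma qf_nonneg {n : ℕ} {A : Matrix (Fin n) (Fin n) ℝ} (hA : A.PosSemidef)
    (x : Fin n → ℝ) : 0 ≤ qf A x := by
  have h := hA.dotProduct_mulVec_nonneg x
  simp only [star_trivial, dotProduct, mulVec] at h
  calc (0:ℝ) ≤ ∑ i, x i * ∑ j, A i j * x j := h
    _ = qf A x := by
      unfold qf
      refine Finset.sum_congr rfl fun i _ => ?_
      rw [Finset.mul_sum]
      exact Finset.sum_congr rfl fun j _ => by ring

lemma vecMulVec_psd {n : ℕ} (x : Fin n → ℝ) : (vecMulVec x x).PosSemidef := by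
  refine Matrix.PosSemidef.of_dotProduct_mulVec_nonneg ?_ ?_
  · ext i j
    simp [vecMulVec_apply, conjTranspose_apply, mul_comm]
  · intro y
    have : star y ⬝ᵥ (vecMulVec x x *ᵥ y) = (∑ i, x i * y i) * (∑ j, x j * y j) := by
      simp only [star_trivial, dotProduct, mulVec, vecMulVec_apply, Finset.sum_mul]
      refine Finset.sum_congr rfl fun i _ => ?_
      rw [Finset.mul_sum, Finset.mul_sum]
      exact Finset.sum_congr rfl fun j _ => by ring
    rw [this]
    exact mul_self_nonneg _

lemma sum_qf {n N : ℕ} (A : Matrix (Fin n) (Fin n) ℝ) (v : Fin N → Fin n → ℝ) :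
    ∑ k, qf A (v k) = ∑ i, ∑ j, A i j * (∑ k, v k i * v k j) := by
  unfold qf
  rw [Finset.sum_comm]
  refine Finset.sum_congr rfl fun i _ => ?_
  rw [Finset.sum_comm]
  refine Finset.sum_congr rfl fun j _ => ?_
  rw [Finset.mul_sum]

lemma qf_pair {n : ℕ} (A : Matrix (Fin n) (Fin n) ℝ) {a b x y : Fin n → ℝ}
    (h : ∀ p q, a p * a q + b p * b q = x p * x q + y p * y q) :
    qf A a + qf A b = qf A x + qf A y := by
  simp only [qf, ← Finset.sum_add_distrib]
  refine Finset.sum_congr rfl fun p _ => Finset.sum_congr rfl fun q _ => ?_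
  rw [← mul_add, h p q, mul_add]

lemma sz {n N : ℕ} (B : Matrix (Fin n) (Fin n) ℝ) :
    ∀ (c : ℕ) (v : Fin N → Fin n → ℝ),
      (Finset.univ.filter fun k => qf B (v k) ≠ 0).card ≤ c →
      (∑ k, qf B (v k)) = 0 →
      ∃ w : Fin N → Fin n → ℝ,
        (∀ p q, ∑ k, w k p * w k q = ∑ k, v k p * v k q) ∧ ∀ k, qf B (w k) = 0 := by
  intro c
  induction c with
  | zero =>
    intro v hc hs
    refine ⟨v, fun p q => rfl, fun k => ?_⟩
    by_contra hk
    have : k ∈ Finset.univ.filter fun k => qf B (v k) ≠ 0 := by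
      simp [hk]
    have := Finset.card_pos.2 ⟨k, this⟩
    omega
  | succ c ih =>
    intro v hc hs
    by_cases hall : ∀ k, qf B (v k) = 0
    · exact ⟨v, fun p q => rfl, hall⟩
    push_neg at hall
    obtain ⟨i0, hi0⟩ := hall
    -- find i, j distinct with qf (v i) > 0, qf (v j) < 0
    obtain ⟨i, j, hij, hqi, hqj⟩ :
        ∃ i j, i ≠ j ∧ 0 < qf B (v i) ∧ qf B (v j) < 0 := by
      rcases lt_or_gt_of_ne hi0 with hneg | hpos
      · have hlt : (0:ℝ) < ∑ k ∈ Finset.univ.erase i0, qf B (v k) := by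
          have := Finset.add_sum_erase Finset.univ (fun k => qf B (v k)) (Finset.mem_univ i0)
          linarith [this ▸ hs]
        obtain ⟨j, hjmem, hjlt⟩ := Finset.exists_lt_of_sum_lt
          (show ∑ k ∈ Finset.univ.erase i0, (0:ℝ) < ∑ k ∈ Finset.univ.erase i0, qf B (v k) by
            simpa using hlt)
        exact ⟨j, i0, (Finset.mem_erase.1 hjmem).1, hjlt, hneg⟩
      · have hlt : ∑ k ∈ Finset.univ.erase i0, qf B (v k) < 0 := by
          have := Finset.add_sum_erase Finset.univ (fun k => qf B (v k)) (Finset.mem_univ i0)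
          linarith [this ▸ hs]
        obtain ⟨j, hjmem, hjlt⟩ := Finset.exists_lt_of_sum_lt
          (show ∑ k ∈ Finset.univ.erase i0, qf B (v k) < ∑ k ∈ Finset.univ.erase i0, (0:ℝ) by
            simpa using hlt)
        exact ⟨i0, j, fun h => (Finset.mem_erase.1 hjmem).1 h.symm, hpos, hjlt⟩
    -- IVT to find rotation angle
    set f : ℝ → ℝ := fun t => qf B (Real.cos t • v i + Real.sin t • v j) with hf
    have hcont : Continuous f := by
      apply continuous_finset_sum; intro p _
      apply continuous_finset_sum; intro q _
      simp only [Pi.add_apply, Pi.smul_apply, smul_eq_mul]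
      fun_prop
    have hf0 : f 0 = qf B (v i) := by simp [hf]
    have hfp : f (Real.pi / 2) = qf B (v j) := by simp [hf]
    obtain ⟨t, -, ht⟩ := intermediate_value_Icc' (by positivity : (0:ℝ) ≤ Real.pi / 2)
      hcont.continuousOn (by rw [hf0, hfp]; exact ⟨le_of_lt hqj, le_of_lt hqi⟩)
    set cc := Real.cos t with hcc
    set ss := Real.sin t with hss
    have hcs : cc ^ 2 + ss ^ 2 = 1 := by
      rw [hcc, hss]; exact Real.cos_sq_add_sin_sq t
    set u : Fin n → ℝ := cc • v i + ss • v j with hu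
    set w0 : Fin n → ℝ := (-ss) • v i + cc • v j with hw0
    have hqu : qf B u = 0 := ht
    have hpair : ∀ p q, u p * u q + w0 p * w0 q = v i p * v i q + v j p * v j q := by
      intro p q
      simp only [hu, hw0, Pi.add_apply, Pi.smul_apply, smul_eq_mul]
      linear_combination (v i p * v i q + v j p * v j q) * hcs
    set v' : Fin N → Fin n → ℝ := Function.update (Function.update v i u) j w0 with hv'
    have hv'i : v' i = u := by
      rw [hv', Function.update_of_ne hij, Function.update_self]
    have hv'j : v' j = w0 := by rw [hv', Function.update_self]
    have hv'k : ∀ k, k ≠ i → k ≠ j → v' k = v k := by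
      intro k hki hkj
      rw [hv', Function.update_of_ne hkj, Function.update_of_ne hki]
    have key : ∀ (g : (Fin n → ℝ) → ℝ), g u + g w0 = g (v i) + g (v j) →
        ∑ k, g (v' k) = ∑ k, g (v k) := by
      intro g hg
      have hjmem : j ∈ Finset.univ.erase i := Finset.mem_erase.2 ⟨hij.symm, Finset.mem_univ j⟩
      rw [← Finset.add_sum_erase Finset.univ (fun k => g (v' k)) (Finset.mem_univ i),
          ← Finset.add_sum_erase Finset.univ (fun k => g (v k)) (Finset.mem_univ i),
          ← Finset.add_sum_erase _ (fun k => g (v' k)) hjmem,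
          ← Finset.add_sum_erase _ (fun k => g (v k)) hjmem]
      have heq : ∑ k ∈ (Finset.univ.erase i).erase j, g (v' k)
          = ∑ k ∈ (Finset.univ.erase i).erase j, g (v k) := by
        refine Finset.sum_congr rfl fun k hk => ?_
        simp only [Finset.mem_erase, Finset.mem_univ, and_true] at hk
        rw [hv'k k hk.2 hk.1]
      rw [heq, hv'i, hv'j]
      linarith [hg]
    have houter : ∀ p q, ∑ k, v' k p * v' k q = ∑ k, v k p * v k q := by
      intro p q
      exact key (fun x => x p * x q) (hpair p q)
    have hqsum : ∑ k, qf B (v' k) = 0 := by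
      rw [key (qf B) (qf_pair B hpair), hs]
    have hcard : (Finset.univ.filter fun k => qf B (v' k) ≠ 0).card ≤ c := by
      have hsub : (Finset.univ.filter fun k => qf B (v' k) ≠ 0) ⊆
          (Finset.univ.filter fun k => qf B (v k) ≠ 0).erase i := by
        intro k hk
        simp only [Finset.mem_filter, Finset.mem_univ, true_and] at hk
        have hki : k ≠ i := by
          rintro rfl
          rw [hv'i, hqu] at hk; exact hk rfl
        rw [Finset.mem_erase]
        refine ⟨hki, Finset.mem_filter.2 ⟨Finset.mem_univ k, ?_⟩⟩
        by_cases hkj : k = j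
        · subst hkj; exact ne_of_lt hqj
        · rw [← hv'k k hki hkj]; exact hk
      have himem : i ∈ Finset.univ.filter fun k => qf B (v k) ≠ 0 :=
        Finset.mem_filter.2 ⟨Finset.mem_univ i, ne_of_gt hqi⟩
      calc (Finset.univ.filter fun k => qf B (v' k) ≠ 0).card
          ≤ ((Finset.univ.filter fun k => qf B (v k) ≠ 0).erase i).card :=
            Finset.card_le_card hsub
        _ = (Finset.univ.filter fun k => qf B (v k) ≠ 0).card - 1 :=
            Finset.card_erase_of_mem himem
        _ ≤ c := by omega
    obtain ⟨w, hw1, hw2⟩ := ih v' hcard hqsum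
    exact ⟨w, fun p q => (hw1 p q).trans (houter p q), hw2⟩

lemma qf_vecMulVec {n : ℕ} (A : Matrix (Fin n) (Fin n) ℝ) (x : Fin n → ℝ) :
    (∑ i, ∑ j, A i j * vecMulVec x x i j) = qf A x := by
  simp only [vecMulVec_apply, qf]

/-- under Condition (B), from an SDP-feasible `X̄` with an active
constraint `B^{k₀} • X̄ = 0` and a PSD `Ȳ` with `Ȳ • X̄ = 0`, one can extract a
rank-one matrix `X̃ = xxᵀ` that is feasible and still complementary to `Ȳ`. -/
theorem rankOne_solution_of_active_constraint (n m : ℕ)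
    (B : Fin m → Matrix (Fin n) (Fin n) ℝ) (hBsym : ∀ k, (B k).IsSymm)
    (H : Matrix (Fin n) (Fin n) ℝ) (hH : H.IsSymm)
    (hCondB : ∀ k : Fin m, ∀ X : Matrix (Fin n) (Fin n) ℝ, X.PosSemidef →
      (∑ i, ∑ j, B k i j * X i j) = 0 → ∀ l : Fin m, 0 ≤ ∑ i, ∑ j, B l i j * X i j)
    (Xb : Matrix (Fin n) (Fin n) ℝ) (hXb : Xb.PosSemidef)
    (hfeas : ∀ k : Fin m, 0 ≤ ∑ i, ∑ j, B k i j * Xb i j)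
    (hHX : (∑ i, ∑ j, H i j * Xb i j) = 1)
    (k₀ : Fin m) (hk₀ : (∑ i, ∑ j, B k₀ i j * Xb i j) = 0)
    (Yb : Matrix (Fin n) (Fin n) ℝ) (hYb : Yb.PosSemidef)
    (hYX : (∑ i, ∑ j, Yb i j * Xb i j) = 0) :
    ∃ x : Fin n → ℝ,
      (∀ k : Fin m, 0 ≤ ∑ i, ∑ j, B k i j * vecMulVec x x i j) ∧
      (∑ i, ∑ j, H i j * vecMulVec x x i j) = 1 ∧
      (∑ i, ∑ j, Yb i j * vecMulVec x x i j) = 0 := by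
  -- decompose Xb = ∑ v k ⊗ v k via the psd square root
  set S := (open scoped MatrixOrder in CFC.sqrt Xb) with hS
  set v : Fin n → Fin n → ℝ := fun k i => S i k with hv
  have hSsymm : ∀ p q, S p q = S q p := by
    intro p q
    have := (open scoped MatrixOrder in (CFC.sqrt_nonneg Xb).posSemidef).1
    have h := congrFun (congrFun this p) q
    simpa using h.symm
  have hXv : ∀ p q, (∑ k, v k p * v k q) = Xb p q := by
    intro p q
    have := congrFun (congrFun (open scoped MatrixOrder in CFC.sqrt_mul_sqrt_self Xb hXb.nonneg) p) q
    rw [← this]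
    simp only [Matrix.mul_apply, hv]
    exact Finset.sum_congr rfl fun k _ => by rw [← hS, hSsymm k q]
  have hinner : ∀ A : Matrix (Fin n) (Fin n) ℝ,
      (∑ k, qf A (v k)) = ∑ i, ∑ j, A i j * Xb i j := by
    intro A
    rw [sum_qf]
    exact Finset.sum_congr rfl fun i _ => Finset.sum_congr rfl fun j _ => by rw [hXv]
  -- apply Sturm–Zhang to B k₀
  obtain ⟨w, hw1, hw2⟩ := sz (B k₀) ((Finset.univ.filter fun k => qf (B k₀) (v k) ≠ 0).card)
    v le_rfl (by rw [hinner]; exact hk₀)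
  have hwX : ∀ p q, (∑ k, w k p * w k q) = Xb p q := fun p q => (hw1 p q).trans (hXv p q)
  have hwinner : ∀ A : Matrix (Fin n) (Fin n) ℝ,
      (∑ k, qf A (w k)) = ∑ i, ∑ j, A i j * Xb i j := by
    intro A
    rw [sum_qf]
    exact Finset.sum_congr rfl fun i _ => Finset.sum_congr rfl fun j _ => by rw [hwX]
  -- each piece is feasible by Condition (B)
  have hfeask : ∀ k, ∀ l : Fin m, 0 ≤ qf (B l) (w k) := by
    intro k l
    have h0 : (∑ i, ∑ j, B k₀ i j * vecMulVec (w k) (w k) i j) = 0 := by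
      rw [qf_vecMulVec]; exact hw2 k
    have := hCondB k₀ (vecMulVec (w k) (w k)) (vecMulVec_psd (w k)) h0 l
    rwa [qf_vecMulVec] at this
  -- each piece is complementary to Yb
  have hYk : ∀ k, qf Yb (w k) = 0 := by
    have hsum : (∑ k, qf Yb (w k)) = 0 := by rw [hwinner]; exact hYX
    intro k
    exact (Finset.sum_eq_zero_iff_of_nonneg (fun k _ => qf_nonneg hYb (w k))).1 hsum k
      (Finset.mem_univ k)
  -- some piece has positive H-value
  have hHsum : (∑ k, qf H (w k)) = 1 := by rw [hwinner]; exact hHX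
  have hex : ∃ k, 0 < qf H (w k) := by
    by_contra hno
    push_neg at hno
    have : (∑ k, qf H (w k)) ≤ 0 := Finset.sum_nonpos fun k _ => hno k
    linarith [hHsum ▸ this]
  obtain ⟨k, hk⟩ := hex
  set h := qf H (w k) with hh
  refine ⟨(1 / Real.sqrt h) • w k, ?_, ?_, ?_⟩
  · intro l
    rw [qf_vecMulVec, qf_smul]
    have : (0:ℝ) ≤ (1 / Real.sqrt h) ^ 2 := sq_nonneg _
    exact mul_nonneg this (hfeask k l)
  · rw [qf_vecMulVec, qf_smul, ← hh]
    rw [div_pow, one_pow, Real.sq_sqrt (le_of_lt hk)]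
    field_simp
  · rw [qf_vecMulVec, qf_smul, hYk k, mul_zero]
end
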